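/- If T(u) is the generating matrix of the extended Yangian X(g_N) satisfying R(u-v) T_1(u) T_2(v) = T_2(v) T_1(u) R(u-v), then S(u) := T(-u)^{-1} T(u) satisfies the reflection equation R(u-v) S_1(u) R(u+v) S_2(v) = S_2(v) R(u+v) S_1(u) R(u-v) and S(u) S(-u) = 1; hence S(u) ↦ T(-u)^{-1} T(u) defines an algebra homomorphism B(g_N) → X(g_N). -/

import Mathlib

open Matrix
open scoped Kronecker BigOperators

noncomputable section

/-- The permutation operator `P = Σ_{i,j} e_{ij} ⊗ e_{ji}` on `ℂ^N ⊗ ℂ^N`. -/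
def Pop (N : ℕ) : Matrix (Fin N × Fin N) (Fin N × Fin N) ℂ :=
  ∑ i : Fin N, ∑ j : Fin N,
    (Matrix.single i j (1 : ℂ)) ⊗ₖ (Matrix.single j i (1 : ℂ))

/-- The partial transpose `P^t = Σ_{i,j} e_{ij} ⊗ e_{ij}`. -/
def Ptop (N : ℕ) : Matrix (Fin N × Fin N) (Fin N × Fin N) ℂ :=
  ∑ i : Fin N, ∑ j : Fin N,
    (Matrix.single i j (1 : ℂ)) ⊗ₖ (Matrix.single i j (1 : ℂ))

/-- `Q = G₁ P^t G₁⁻¹`. -/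
def Qop (N : ℕ) (G : Matrix (Fin N) (Fin N) ℂ) : Matrix (Fin N × Fin N) (Fin N × Fin N) ℂ :=
  (G ⊗ₖ (1 : Matrix (Fin N) (Fin N) ℂ)) * Ptop N * (G⁻¹ ⊗ₖ (1 : Matrix (Fin N) (Fin N) ℂ))

variable {N : ℕ} {A : Type*}

/-- Embedding `M ↦ M ⊗ 1` of an `A`-valued matrix into the first tensor factor. -/
def emb1 [Ring A] (M : Matrix (Fin N) (Fin N) A) :
    Matrix (Fin N × Fin N) (Fin N × Fin N) A :=
  Matrix.of fun p q => if p.2 = q.2 then M p.1 q.1 else 0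

/-- Embedding `M ↦ 1 ⊗ M` of an `A`-valued matrix into the second tensor factor. -/
def emb2 [Ring A] (M : Matrix (Fin N) (Fin N) A) :
    Matrix (Fin N × Fin N) (Fin N × Fin N) A :=
  Matrix.of fun p q => if p.1 = q.1 then M p.2 q.2 else 0

/-! ### Auxiliary lemmas -/

lemma Pop_apply (p q : Fin N × Fin N) :
    Pop N p q = if p.1 = q.2 ∧ p.2 = q.1 then 1 else 0 := by
  classical
  simp [Pop, Matrix.sum_apply, Matrix.kroneckerMap_apply, Matrix.single,
    ite_and, Finset.sum_ite_eq, Finset.sum_ite_eq']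
  aesop

lemma Ptop_apply (p q : Fin N × Fin N) :
    Ptop N p q = if p.1 = p.2 ∧ q.1 = q.2 then 1 else 0 := by
  classical
  simp [Ptop, Matrix.sum_apply, Matrix.kroneckerMap_apply, Matrix.single,
    ite_and, Finset.sum_ite_eq, Finset.sum_ite_eq']
  aesop

lemma Qop_apply (G : Matrix (Fin N) (Fin N) ℂ) (p q : Fin N × Fin N) :
    Qop N G p q = G p.1 p.2 * G⁻¹ q.2 q.1 := by
  classical
  simp only [Qop, Matrix.mul_apply, Fintype.sum_prod_type, Matrix.kroneckerMap_apply,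
    Ptop_apply, Matrix.one_apply, ite_and, mul_ite, ite_mul, mul_one, mul_zero, zero_mul,
    one_mul, Finset.sum_ite_eq, Finset.sum_ite_eq']
  simp

lemma PopPop : Pop N * Pop N = 1 := by
  classical
  ext p q
  simp [Matrix.mul_apply, Fintype.sum_prod_type, Pop_apply, Matrix.one_apply, ite_and,
    Finset.sum_ite_eq, Finset.sum_ite_eq']
  aesop

lemma PQcomm (G : Matrix (Fin N) (Fin N) ℂ) (hG : IsUnit G.det) (e : ℂ)
    (he : (e = 1 ∧ Gᵀ = G) ∨ (e = -1 ∧ Gᵀ = -G)) :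
    Pop N * Qop N G = Qop N G * Pop N := by
  classical
  have hL : ∀ p q : Fin N × Fin N, (Pop N * Qop N G) p q = G p.2 p.1 * G⁻¹ q.2 q.1 := by
    intro p q
    simp [Matrix.mul_apply, Fintype.sum_prod_type, Pop_apply, Qop_apply, ite_and,
      Finset.sum_ite_eq, Finset.sum_ite_eq']
  have hR : ∀ p q : Fin N × Fin N, (Qop N G * Pop N) p q = G p.1 p.2 * G⁻¹ q.1 q.2 := by
    intro p q
    simp [Matrix.mul_apply, Fintype.sum_prod_type, Pop_apply, Qop_apply, ite_and,
      Finset.sum_ite_eq, Finset.sum_ite_eq']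
  ext p q
  rw [hL, hR]
  rcases he with ⟨_, hsym⟩ | ⟨_, hskew⟩
  · have h1 : G p.2 p.1 = G p.1 p.2 := by
      have := congrFun (congrFun hsym p.1) p.2
      simpa [Matrix.transpose_apply] using this
    have h2 : G⁻¹ᵀ = G⁻¹ := by rw [Matrix.transpose_nonsing_inv, hsym]
    have h3 : G⁻¹ q.1 q.2 = G⁻¹ q.2 q.1 := by
      have := congrFun (congrFun h2 q.2) q.1
      simpa [Matrix.transpose_apply] using this
    rw [h1, h3]
  · have h1 : G p.2 p.1 = -G p.1 p.2 := by
      have := congrFun (congrFun hskew p.1) p.2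
      simpa [Matrix.transpose_apply] using this
    have h2 : G⁻¹ᵀ = -G⁻¹ := by
      rw [Matrix.transpose_nonsing_inv, hskew]
      have : (-G) * (-G⁻¹) = 1 := by
        rw [Matrix.neg_mul, Matrix.mul_neg, neg_neg, Matrix.mul_nonsing_inv G hG]
      rw [Matrix.inv_eq_right_inv this]
    have h3 : G⁻¹ q.1 q.2 = -G⁻¹ q.2 q.1 := by
      have := congrFun (congrFun h2 q.2) q.1
      simpa [Matrix.transpose_apply] using this
    rw [h1, h3]; ring

section EmbLemmas
variable [Ring A]

lemma emb1_mul (M M' : Matrix (Fin N) (Fin N) A) :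
    emb1 (M * M') = emb1 M * emb1 M' := by
  classical
  ext p q
  simp [emb1, Matrix.mul_apply, Fintype.sum_prod_type, ite_and, mul_ite, ite_mul,
    mul_zero, zero_mul, Finset.sum_ite_eq, Finset.sum_ite_eq']
  try aesop

lemma emb2_mul (M M' : Matrix (Fin N) (Fin N) A) :
    emb2 (M * M') = emb2 M * emb2 M' := by
  classical
  ext p q
  simp [emb2, Matrix.mul_apply, Fintype.sum_prod_type, ite_and, mul_ite, ite_mul,
    mul_zero, zero_mul, Finset.sum_ite_eq, Finset.sum_ite_eq']
  try aesop

lemma emb1_one : emb1 (1 : Matrix (Fin N) (Fin N) A) = 1 := by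
  classical
  ext p q
  simp [emb1, Matrix.one_apply, ite_and, Prod.ext_iff]
  try aesop

lemma emb2_one : emb2 (1 : Matrix (Fin N) (Fin N) A) = 1 := by
  classical
  ext p q
  simp [emb2, Matrix.one_apply, ite_and, Prod.ext_iff]
  try aesop

end EmbLemmas

section PmapLemmas
variable [Ring A] [Algebra ℂ A]

lemma Pmap_emb1 (M : Matrix (Fin N) (Fin N) A) :
    (Pop N).map (algebraMap ℂ A) * emb1 M = emb2 M * (Pop N).map (algebraMap ℂ A) := by
  classical
  ext p q
  simp [Matrix.mul_apply, Matrix.map_apply, Fintype.sum_prod_type, Pop_apply, emb1, emb2,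
    ite_and, apply_ite (algebraMap ℂ A), mul_ite, ite_mul, mul_zero, zero_mul,
    Finset.sum_ite_eq, Finset.sum_ite_eq']

lemma Pmap_emb2 (M : Matrix (Fin N) (Fin N) A) :
    (Pop N).map (algebraMap ℂ A) * emb2 M = emb1 M * (Pop N).map (algebraMap ℂ A) := by
  classical
  ext p q
  simp [Matrix.mul_apply, Matrix.map_apply, Fintype.sum_prod_type, Pop_apply, emb1, emb2,
    ite_and, apply_ite (algebraMap ℂ A), mul_ite, ite_mul, mul_zero, zero_mul,
    Finset.sum_ite_eq, Finset.sum_ite_eq']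

end PmapLemmas

/-- Conjugation of a three-factor exchange relation by an inverse. -/
lemma conj_rel {M : Type*} [Monoid M] {a b x xi : M} (h1 : x * xi = 1) (h2 : xi * x = 1)
    (h : a * b * x = x * b * a) : xi * a * b = b * a * xi := by
  calc xi * a * b = xi * a * b * (x * xi) := by rw [h1, mul_one]
    _ = xi * (a * b * x) * xi := by simp only [mul_assoc]
    _ = xi * (x * b * a) * xi := by rw [h]
    _ = (xi * x) * (b * (a * xi)) := by simp only [mul_assoc]
    _ = b * a * xi := by rw [h2, one_mul, ← mul_assoc]

/-- The abstract chain of manipulations proving the reflection equation. -/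
lemma chain_rel {M : Type*} [Monoid M] {rm rp x1 y1 x2 y2 : M}
    (hB : x1 * rp * y2 = y2 * rp * x1)
    (hS : rm * y1 * y2 = y2 * y1 * rm)
    (hC : rm * rp = rp * rm)
    (hT : rm * x1 * x2 = x2 * x1 * rm)
    (hB' : y1 * rp * x2 = x2 * rp * y1) :
    rm * (y1 * x1) * rp * (y2 * x2) = y2 * x2 * rp * (y1 * x1) * rm := by
  have hBz : ∀ z, x1 * (rp * (y2 * z)) = y2 * (rp * (x1 * z)) := fun z => by
    simp only [← mul_assoc]; rw [hB]
  have hSz : ∀ z, rm * (y1 * (y2 * z)) = y2 * (y1 * (rm * z)) := fun z => by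
    simp only [← mul_assoc]; rw [hS]
  have hCz : ∀ z, rm * (rp * z) = rp * (rm * z) := fun z => by
    simp only [← mul_assoc]; rw [hC]
  have hT' : rm * (x1 * x2) = x2 * (x1 * rm) := by
    simp only [← mul_assoc]; rw [hT]
  have hB'z : ∀ z, y1 * (rp * (x2 * z)) = x2 * (rp * (y1 * z)) := fun z => by
    simp only [← mul_assoc]; rw [hB']
  simp only [mul_assoc]
  rw [hBz, hSz, hCz, hT', hB'z]

theorem reflection_from_RTT [Ring A] [Algebra ℂ A]
    (G : Matrix (Fin N) (Fin N) ℂ) (hG : IsUnit G.det)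
    (e : ℂ) (he : (e = 1 ∧ Gᵀ = G) ∨ (e = -1 ∧ Gᵀ = -G))
    (T Tinv : ℂ → Matrix (Fin N) (Fin N) A)
    (hTinv : ∀ w, T w * Tinv w = 1 ∧ Tinv w * T w = 1)
    (hRTT : ∀ u v : ℂ, u - v ≠ 0 → u - v - ((N : ℂ) / 2 - e) ≠ 0 →
      (1 - (u - v)⁻¹ • (Pop N).map (algebraMap ℂ A)
          + (u - v - ((N : ℂ) / 2 - e))⁻¹ • (Qop N G).map (algebraMap ℂ A)) *
        emb1 (T u) * emb2 (T v) =
      emb2 (T v) * emb1 (T u) *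
        (1 - (u - v)⁻¹ • (Pop N).map (algebraMap ℂ A)
          + (u - v - ((N : ℂ) / 2 - e))⁻¹ • (Qop N G).map (algebraMap ℂ A))) :
    let κ : ℂ := (N : ℂ) / 2 - e
    let R : ℂ → Matrix (Fin N × Fin N) (Fin N × Fin N) A := fun w =>
      1 - w⁻¹ • (Pop N).map (algebraMap ℂ A) + (w - κ)⁻¹ • (Qop N G).map (algebraMap ℂ A)
    let S : ℂ → Matrix (Fin N) (Fin N) A := fun w => Tinv (-w) * T w
    (∀ u v : ℂ, u - v ≠ 0 → u + v ≠ 0 → u - v - κ ≠ 0 → u + v - κ ≠ 0 →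
      R (u - v) * emb1 (S u) * R (u + v) * emb2 (S v) =
        emb2 (S v) * R (u + v) * emb1 (S u) * R (u - v)) ∧
    (∀ u : ℂ, S u * S (-u) = 1) := by
  classical
  intro κ R S
  set PA := (Pop N).map (algebraMap ℂ A) with hPAdef
  set QA := (Qop N G).map (algebraMap ℂ A) with hQAdef
  have hPP : PA * PA = 1 := by
    rw [hPAdef, ← Matrix.map_mul, PopPop, Matrix.map_one _ (map_zero _) (map_one _)]
  have hPQ : PA * QA = QA * PA := by
    rw [hPAdef, hQAdef, ← Matrix.map_mul, ← Matrix.map_mul, PQcomm G hG e he]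
  have hRdef : ∀ w, R w = 1 - w⁻¹ • PA + (w - κ)⁻¹ • QA := fun w => rfl
  have hPR : ∀ w, PA * R w = R w * PA := by
    intro w
    rw [hRdef w]
    simp only [mul_sub, sub_mul, mul_add, add_mul, mul_one, one_mul,
      Matrix.mul_smul, Matrix.smul_mul, hPQ]
  have hRR : ∀ a b, R a * R b = R b * R a := by
    intro a b
    rw [hRdef a, hRdef b]
    simp only [mul_sub, sub_mul, mul_add, add_mul, mul_one, one_mul,
      Matrix.mul_smul, Matrix.smul_mul, smul_smul, hPQ]
    module
  have hE1 : ∀ w, emb1 (T w) * emb1 (Tinv w) = 1 := fun w => by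
    rw [← emb1_mul, (hTinv w).1, emb1_one]
  have hE1' : ∀ w, emb1 (Tinv w) * emb1 (T w) = 1 := fun w => by
    rw [← emb1_mul, (hTinv w).2, emb1_one]
  have hE2 : ∀ w, emb2 (T w) * emb2 (Tinv w) = 1 := fun w => by
    rw [← emb2_mul, (hTinv w).1, emb2_one]
  have hE2' : ∀ w, emb2 (Tinv w) * emb2 (T w) = 1 := fun w => by
    rw [← emb2_mul, (hTinv w).2, emb2_one]
  have hRTT' : ∀ u v : ℂ, u - v ≠ 0 → u - v - κ ≠ 0 →
      R (u - v) * emb1 (T u) * emb2 (T v) = emb2 (T v) * emb1 (T u) * R (u - v) :=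
    fun u v h1 h2 => hRTT u v h1 h2
  -- helper rewriting forms
  have hP1z : ∀ (B : Matrix (Fin N) (Fin N) A) (z), PA * (emb1 B * z) = emb2 B * (PA * z) :=
    fun B z => by simp only [← mul_assoc]; rw [Pmap_emb1]
  have hP2z : ∀ (B : Matrix (Fin N) (Fin N) A) (z), PA * (emb2 B * z) = emb1 B * (PA * z) :=
    fun B z => by simp only [← mul_assoc]; rw [Pmap_emb2]
  have hPRz : ∀ (w : ℂ) (z), PA * (R w * z) = R w * (PA * z) :=
    fun w z => by simp only [← mul_assoc]; rw [hPR]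
  have hswap : ∀ u v : ℂ, u - v ≠ 0 → u - v - κ ≠ 0 →
      R (u - v) * emb2 (T u) * emb1 (T v) = emb1 (T v) * emb2 (T u) * R (u - v) := by
    intro u v h1 h2
    have h := hRTT' u v h1 h2
    have eL : PA * (R (u - v) * emb1 (T u) * emb2 (T v)) * PA
        = R (u - v) * emb2 (T u) * emb1 (T v) := by
      simp only [mul_assoc]
      rw [hPRz, hP1z, hP2z, hPP, mul_one]
    have eR : PA * (emb2 (T v) * emb1 (T u) * R (u - v)) * PA
        = emb1 (T v) * emb2 (T u) * R (u - v) := by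
      simp only [mul_assoc]
      rw [hP2z, hP1z, hPRz, hPP, mul_one]
    rw [← eL, ← eR, h]
  constructor
  · intro u v h1 h2 h3 h4
    have hmv : u - -v = u + v := sub_neg_eq_add u v
    have b0 := hRTT' u (-v) (by rw [hmv]; exact h2) (by rw [hmv]; exact h4)
    rw [hmv] at b0
    have hB : emb1 (T u) * R (u + v) * emb2 (Tinv (-v))
        = emb2 (Tinv (-v)) * R (u + v) * emb1 (T u) :=
      (conj_rel (hE2 (-v)) (hE2' (-v)) b0).symm
    have hvu : v - -u = u + v := by rw [sub_neg_eq_add, add_comm]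
    have b1 := hswap v (-u) (by rw [hvu]; exact h2) (by rw [hvu]; exact h4)
    rw [hvu] at b1
    have hB' : emb1 (Tinv (-u)) * R (u + v) * emb2 (T v)
        = emb2 (T v) * R (u + v) * emb1 (Tinv (-u)) :=
      conj_rel (hE1 (-u)) (hE1' (-u)) b1
    have hmv2 : -v - -u = u - v := by ring
    have s0 := hswap (-v) (-u) (by rw [hmv2]; exact h1) (by rw [hmv2]; exact h3)
    rw [hmv2] at s0
    have s1 : emb1 (Tinv (-u)) * R (u - v) * emb2 (T (-v))
        = emb2 (T (-v)) * R (u - v) * emb1 (Tinv (-u)) :=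
      conj_rel (hE1 (-u)) (hE1' (-u)) s0
    have hS : emb2 (Tinv (-v)) * emb1 (Tinv (-u)) * R (u - v)
        = R (u - v) * emb1 (Tinv (-u)) * emb2 (Tinv (-v)) :=
      conj_rel (hE2 (-v)) (hE2' (-v)) s1
    show R (u - v) * emb1 (Tinv (-u) * T u) * R (u + v) * emb2 (Tinv (-v) * T v)
        = emb2 (Tinv (-v) * T v) * R (u + v) * emb1 (Tinv (-u) * T u) * R (u - v)
    rw [emb1_mul, emb2_mul]
    exact chain_rel hB hS.symm (hRR _ _) (hRTT' u v h1 h3) hB'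
  · intro u
    show Tinv (-u) * T u * (Tinv (-(-u)) * T (-u)) = 1
    rw [neg_neg, mul_assoc, ← mul_assoc (T u), (hTinv u).1, one_mul, (hTinv (-u)).2]

end
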